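/- arXiv:1705.01223 — 2 statements merged into one kernel-verified Lean document; each statement's English description precedes it below -/
import Mathlib

section
/- For every n ≥ 1 and D > 0 there is a constant C₂ > 0 such that for every δ > 0, all nonempty compact sets A, B ⊂ ℝⁿ of diameter at most D, and every δ-isometry f : A → B, there exists a surjective isometry g of ℝⁿ with ‖g(x) − f(x)‖ ≤ C₂·√δ for all x ∈ A. -/
open Metric Set Module

noncomputable section

local notation "⟪" x ", " y "⟫" => @inner ℝ _ _ x y

def Ccst : ℕ → ℝ
  | 0 => 31
  | (m+1) => 8 * Ccst m + 17

lemma Ccst_ge (m : ℕ) : 31 ≤ Ccst m := by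
  induction m with
  | zero => simp [Ccst]
  | succ m ih => simp only [Ccst]; linarith

lemma Ccst_pos (m : ℕ) : 0 < Ccst m := lt_of_lt_of_le (by norm_num) (Ccst_ge m)

lemma sqLeImp {a b : ℝ} (hb : 0 ≤ b) (h : a ^ 2 ≤ b ^ 2) (ha : 0 ≤ a) : a ≤ b := by
  nlinarith

lemma inner_expand {F : Type} [NormedAddCommGroup F] [InnerProductSpace ℝ F]
    (u v β : F) (s t : ℝ) :
    ⟪u - s • β, v - t • β⟫ = ⟪u, v⟫ - t * ⟪u, β⟫ - s * ⟪v, β⟫ + s * t * ‖β‖ ^ 2 := by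
  rw [inner_sub_left, inner_sub_right, inner_sub_right, real_inner_smul_left,
    real_inner_smul_left, real_inner_smul_right, real_inner_smul_right,
    real_inner_self_eq_norm_sq, real_inner_comm β v]
  ring

lemma exists_liso (E F : Type) [NormedAddCommGroup E] [InnerProductSpace ℝ E]
    [FiniteDimensional ℝ E] [NormedAddCommGroup F] [InnerProductSpace ℝ F]
    [FiniteDimensional ℝ F] (h : finrank ℝ E = finrank ℝ F) :
    Nonempty (E ≃ₗᵢ[ℝ] F) := by
  refine ⟨(stdOrthonormalBasis ℝ E).repr.trans ?_⟩
  refine LinearIsometryEquiv.trans ?_ (stdOrthonormalBasis ℝ F).repr.symm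
  exact (LinearIsometryEquiv.piLpCongrLeft 2 ℝ ℝ (finCongr h))

lemma trivialCase (E F : Type) [NormedAddCommGroup E] [InnerProductSpace ℝ E]
    [FiniteDimensional ℝ E] [NormedAddCommGroup F] [InnerProductSpace ℝ F]
    [FiniteDimensional ℝ F] (h : finrank ℝ E = finrank ℝ F)
    (ε R : ℝ) (hε : 0 < ε) (A : Set E) (φ : E → F)
    (hnorm : ∀ x ∈ A, ‖x‖ ≤ R) (hRs : R ≤ 15 * Real.sqrt ε)
    (hip : ∀ x ∈ A, ∀ y ∈ A, |⟪φ x, φ y⟫ - ⟪x, y⟫| ≤ ε) :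
    ∃ U : E ≃ₗᵢ[ℝ] F, ∀ x ∈ A, ‖U x - φ x‖ ≤ 31 * Real.sqrt ε := by
  obtain ⟨U⟩ := exists_liso E F h
  refine ⟨U, fun x hx => ?_⟩
  have h1 : ‖U x - φ x‖ ≤ ‖U x‖ + ‖φ x‖ := norm_sub_le _ _
  have h2 : ‖U x‖ = ‖x‖ := U.norm_map x
  have h3 : |⟪φ x, φ x⟫ - ⟪x, x⟫| ≤ ε := hip x hx x hx
  rw [real_inner_self_eq_norm_sq, real_inner_self_eq_norm_sq, abs_le] at h3
  have hsε : 0 ≤ Real.sqrt ε := Real.sqrt_nonneg ε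
  have hsq : Real.sqrt ε ^ 2 = ε := Real.sq_sqrt hε.le
  have h4 : ‖φ x‖ ≤ ‖x‖ + Real.sqrt ε := by
    refine sqLeImp (by positivity) ?_ (norm_nonneg _)
    nlinarith [norm_nonneg x, h3.2]
  have h5 : ‖x‖ ≤ 15 * Real.sqrt ε := (hnorm x hx).trans hRs
  linarith

set_option maxHeartbeats 2000000 in
theorem keyLemma (m : ℕ) : ∀ (N : ℕ) (E F : Type)
    [NormedAddCommGroup E] [InnerProductSpace ℝ E] [FiniteDimensional ℝ E]
    [NormedAddCommGroup F] [InnerProductSpace ℝ F] [FiniteDimensional ℝ F],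
    finrank ℝ E = m → finrank ℝ F = m →
    ∀ (ε R : ℝ), 0 < ε →
    ∀ (A : Set E) (φ : E → F),
    (∀ x ∈ A, ‖x‖ ≤ R) → R ≤ 2 ^ N * 15 * Real.sqrt ε →
    (∀ x ∈ A, ∀ y ∈ A, |⟪φ x, φ y⟫ - ⟪x, y⟫| ≤ ε) →
    ∃ U : E ≃ₗᵢ[ℝ] F, ∀ x ∈ A, ‖U x - φ x‖ ≤ Ccst m * Real.sqrt ε := by
  induction m using Nat.strong_induction_on with
  | _ m IH =>
  intro N
  induction N with
  | zero =>
    intro E F iE1 iE2 iE3 iF1 iF2 iF3 hE hF ε R hε A φ hnorm hR hip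
    obtain ⟨U, hU⟩ := trivialCase E F (hE.trans hF.symm) ε R hε A φ hnorm
      (by simpa using hR) hip
    exact ⟨U, fun x hx => (hU x hx).trans
      (mul_le_mul_of_nonneg_right (Ccst_ge m) (Real.sqrt_nonneg ε))⟩
  | succ N IHN =>
    intro E F iE1 iE2 iE3 iF1 iF2 iF3 hE hF ε R hε A φ hnorm hR hip
    by_cases hbase : R ≤ 15 * Real.sqrt ε
    · obtain ⟨U, hU⟩ := trivialCase E F (hE.trans hF.symm) ε R hε A φ hnorm hbase hip
      exact ⟨U, fun x hx => (hU x hx).trans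
        (mul_le_mul_of_nonneg_right (Ccst_ge m) (Real.sqrt_nonneg ε))⟩
    by_cases hzoom : ∀ x ∈ A, ‖x‖ ≤ R / 2
    · refine IHN E F hE hF ε (R/2) hε A φ hzoom ?_ hip
      have h2 : (0:ℝ) < Real.sqrt ε := Real.sqrt_pos.mpr hε
      have h3 : (2:ℝ) ^ (N+1) = 2 * 2 ^ N := by ring
      rw [h3] at hR
      linarith
    push_neg at hzoom hbase
    obtain ⟨a, haA, hna⟩ := hzoom
    -- ==================== PEEL CASE ====================
    have hsε : (0:ℝ) < Real.sqrt ε := Real.sqrt_pos.mpr hε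
    have hRpos : (0:ℝ) < R := lt_trans (by positivity) hbase
    have hsq : Real.sqrt ε ^ 2 = ε := Real.sq_sqrt hε.le
    have hε225 : 225 * ε < R ^ 2 := by nlinarith
    have hnaR : ‖a‖ ≤ R := hnorm a haA
    have hna0 : (0:ℝ) < ‖a‖ := lt_of_le_of_lt (by positivity) hna
    have ha0 : a ≠ 0 := by
      intro h; rw [h, norm_zero] at hna0; exact lt_irrefl _ hna0
    set α : F := φ a with hαdef
    have hαa : |‖α‖ ^ 2 - ‖a‖ ^ 2| ≤ ε := by
      have h := hip a haA a haA
      rwa [real_inner_self_eq_norm_sq, real_inner_self_eq_norm_sq] at h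
    have hαlow : R / 3 ≤ ‖α‖ := by
      rw [abs_le] at hαa
      refine sqLeImp (norm_nonneg α) ?_ (by positivity)
      nlinarith [hαa.1]
    have hαup : ‖α‖ ≤ 2 * R := by
      rw [abs_le] at hαa
      refine sqLeImp (by positivity) ?_ (norm_nonneg _)
      nlinarith [hαa.2]
    have hαpos : (0:ℝ) < ‖α‖ := lt_of_lt_of_le (by positivity) hαlow
    have hα0 : α ≠ 0 := by
      intro h; rw [h, norm_zero] at hαpos; exact lt_irrefl _ hαpos
    have hαna : |‖α‖ - ‖a‖| ≤ 2 * ε / R := by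
      have h1 : |‖α‖ - ‖a‖| * (R / 2) ≤ |‖α‖ - ‖a‖| * (‖α‖ + ‖a‖) := by
        apply mul_le_mul_of_nonneg_left _ (abs_nonneg _)
        linarith
      have h2 : |‖α‖ - ‖a‖| * (‖α‖ + ‖a‖) = |‖α‖ ^ 2 - ‖a‖ ^ 2| := by
        rw [← abs_of_nonneg (show (0:ℝ) ≤ ‖α‖ + ‖a‖ by positivity), ← abs_mul]
        congr 1; ring
      rw [le_div_iff₀ hRpos]
      rw [h2] at h1
      linarith
    -- dimension bookkeeping
    have hmpos : 0 < m := by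
      rw [← hE]
      haveI : Nontrivial E := nontrivial_of_ne a 0 ha0
      exact Module.finrank_pos
    obtain ⟨m', rfl⟩ : ∃ m', m = m' + 1 := ⟨m - 1, (Nat.succ_pred_eq_of_pos hmpos).symm⟩
    set E₂ : Submodule ℝ E := (ℝ ∙ a)ᗮ with hE₂def
    set F₂ : Submodule ℝ F := (ℝ ∙ α)ᗮ with hF₂def
    have hdimE₂ : finrank ℝ E₂ = m' := by
      have h1 := Submodule.finrank_add_finrank_orthogonal (K := (ℝ ∙ a)) (E := E)
      rw [finrank_span_singleton ha0, hE] at h1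
      rw [← hE₂def] at h1
      omega
    have hdimF₂ : finrank ℝ F₂ = m' := by
      have h1 := Submodule.finrank_add_finrank_orthogonal (K := (ℝ ∙ α)) (E := F)
      rw [finrank_span_singleton hα0, hF] at h1
      rw [← hF₂def] at h1
      omega
    -- the maps
    set w : E → E := fun x => x - (⟪a, x⟫ / ‖a‖ ^ 2) • a with hwdef
    set ψ : E → F := fun x => φ x - (⟪a, x⟫ / (‖a‖ * ‖α‖)) • α with hψdef
    set ψ' : E → F := fun x => ψ x - (⟪α, ψ x⟫ / ‖α‖ ^ 2) • α with hψ'def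
    have hwmem : ∀ x : E, w x ∈ E₂ := by
      intro x
      rw [hE₂def, Submodule.mem_orthogonal_singleton_iff_inner_right]
      show ⟪a, x - (⟪a, x⟫ / ‖a‖ ^ 2) • a⟫ = 0
      rw [inner_sub_right, real_inner_smul_right, real_inner_self_eq_norm_sq]
      field_simp
      ring
    have hψ'mem : ∀ x : E, ψ' x ∈ F₂ := by
      intro x
      rw [hF₂def, Submodule.mem_orthogonal_singleton_iff_inner_right]
      show ⟪α, ψ x - (⟪α, ψ x⟫ / ‖α‖ ^ 2) • α⟫ = 0
      rw [inner_sub_right, real_inner_smul_right, real_inner_self_eq_norm_sq]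
      field_simp
      ring
    -- pointwise scalar bounds
    have hpx : ∀ x ∈ A, |⟪a, x⟫| ≤ ‖a‖ * R := fun x hx =>
      (abs_real_inner_le_norm a x).trans
        (mul_le_mul_of_nonneg_left (hnorm x hx) (norm_nonneg a))
    have hdx : ∀ x ∈ A, |⟪a, x⟫ / (‖a‖ * ‖α‖)| ≤ 3 := by
      intro x hx
      rw [abs_div, abs_of_pos (by positivity : (0:ℝ) < ‖a‖ * ‖α‖),
        div_le_iff₀ (by positivity : (0:ℝ) < ‖a‖ * ‖α‖)]
      nlinarith [hpx x hx, hαlow, hna0, hRpos]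
    have hαna' : |‖α‖ - ‖a‖| * R ≤ 2 * ε := by
      rw [le_div_iff₀ hRpos] at hαna
      exact hαna
    have he1 : ∀ x ∈ A, |⟪φ x, α⟫ - ⟪a, x⟫| ≤ ε := by
      intro x hx
      have h := hip x hx a haA
      rwa [← real_inner_comm x a] at h
    -- ⟪ψ x, α⟫ is small
    have hψα : ∀ x ∈ A, |⟪ψ x, α⟫| ≤ 5 * ε := by
      intro x hx
      have hexp : ⟪ψ x, α⟫ = (⟪φ x, α⟫ - ⟪a, x⟫) + ⟪a, x⟫ * (‖a‖ - ‖α‖) / ‖a‖ := by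
        show ⟪φ x - (⟪a, x⟫ / (‖a‖ * ‖α‖)) • α, α⟫ = _
        rw [inner_sub_left, real_inner_smul_left, real_inner_self_eq_norm_sq]
        field_simp
        ring
      rw [hexp]
      have h2 : |⟪a, x⟫ * (‖a‖ - ‖α‖) / ‖a‖| ≤ 2 * ε := by
        rw [abs_div, abs_of_pos hna0, div_le_iff₀ hna0, abs_mul]
        have b1 : |‖a‖ - ‖α‖| * R ≤ 2 * ε := by rw [abs_sub_comm]; exact hαna'
        nlinarith [hpx x hx, abs_nonneg (⟪a, x⟫), abs_nonneg (‖a‖ - ‖α‖), hna0, hRpos, hε.le]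
      calc |(⟪φ x, α⟫ - ⟪a, x⟫) + ⟪a, x⟫ * (‖a‖ - ‖α‖) / ‖a‖|
          ≤ |⟪φ x, α⟫ - ⟪a, x⟫| + |⟪a, x⟫ * (‖a‖ - ‖α‖) / ‖a‖| := abs_add_le _ _
        _ ≤ ε + 2 * ε := add_le_add (he1 x hx) h2
        _ ≤ 5 * ε := by linarith
    -- main pair estimate : ψ vs w
    have hψψ : ∀ x ∈ A, ∀ y ∈ A, |⟪ψ x, ψ y⟫ - ⟪w x, w y⟫| ≤ 19 * ε := by
      intro x hx y hy
      have expand1 : ⟪ψ x, ψ y⟫ = ⟪φ x, φ y⟫ - (⟪a,y⟫/(‖a‖*‖α‖)) * ⟪φ x, α⟫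
          - (⟪a,x⟫/(‖a‖*‖α‖)) * ⟪φ y, α⟫
          + (⟪a,x⟫/(‖a‖*‖α‖)) * ((⟪a,y⟫/(‖a‖*‖α‖))) * ‖α‖^2 :=
        inner_expand (φ x) (φ y) α _ _
      have expand2 : ⟪w x, w y⟫ = ⟪x, y⟫ - (⟪a,y⟫/‖a‖^2) * ⟪x, a⟫
          - (⟪a,x⟫/‖a‖^2) * ⟪y, a⟫ + (⟪a,x⟫/‖a‖^2) * ((⟪a,y⟫/‖a‖^2)) * ‖a‖^2 :=
        inner_expand x y a _ _
      rw [← real_inner_comm x a, ← real_inner_comm y a] at expand2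
      have key : ⟪ψ x, ψ y⟫ - ⟪w x, w y⟫
          = (⟪φ x, φ y⟫ - ⟪x, y⟫)
            - (⟪a,y⟫/(‖a‖*‖α‖)) * (⟪φ x, α⟫ - ⟪a, x⟫)
            - (⟪a,x⟫/(‖a‖*‖α‖)) * (⟪φ y, α⟫ - ⟪a, y⟫)
            + 2 * (⟪a,x⟫ * ⟪a,y⟫ * (‖α‖ - ‖a‖)) / (‖a‖^2 * ‖α‖) := by
        rw [expand1, expand2]
        field_simp
        ring
      rw [key]
      have t1 : |⟪φ x, φ y⟫ - ⟪x, y⟫| ≤ ε := hip x hx y hy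
      have t2 : |(⟪a,y⟫/(‖a‖*‖α‖)) * (⟪φ x, α⟫ - ⟪a, x⟫)| ≤ 3 * ε := by
        rw [abs_mul]
        have := mul_le_mul (hdx y hy) (he1 x hx) (abs_nonneg _) (by norm_num)
        linarith
      have t3 : |(⟪a,x⟫/(‖a‖*‖α‖)) * (⟪φ y, α⟫ - ⟪a, y⟫)| ≤ 3 * ε := by
        rw [abs_mul]
        have := mul_le_mul (hdx x hx) (he1 y hy) (abs_nonneg _) (by norm_num)
        linarith
      have t4 : |2 * (⟪a,x⟫ * ⟪a,y⟫ * (‖α‖ - ‖a‖)) / (‖a‖^2 * ‖α‖)| ≤ 12 * ε := by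
        rw [abs_div, abs_of_pos (by positivity : (0:ℝ) < ‖a‖^2 * ‖α‖),
          div_le_iff₀ (by positivity : (0:ℝ) < ‖a‖^2 * ‖α‖)]
        rw [← mul_le_mul_iff_of_pos_right hRpos]
        have habs : |2 * (⟪a,x⟫ * ⟪a,y⟫ * (‖α‖ - ‖a‖))| * R
            = 2 * ((|⟪a,x⟫| * |⟪a,y⟫|) * (|‖α‖ - ‖a‖| * R)) := by
          rw [abs_mul, abs_mul, abs_mul, abs_two]
          ring
        rw [habs]
        have c1 : |⟪a,x⟫| * |⟪a,y⟫| ≤ (‖a‖*R) * (‖a‖*R) :=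
          mul_le_mul (hpx x hx) (hpx y hy) (abs_nonneg _) (by positivity)
        have c2 : (|⟪a,x⟫| * |⟪a,y⟫|) * (|‖α‖ - ‖a‖| * R)
            ≤ ((‖a‖*R) * (‖a‖*R)) * (2 * ε) :=
          mul_le_mul c1 hαna' (by positivity) (by positivity)
        have c3 : 4 * (ε * (‖a‖^2 * (R^2))) ≤ 12 * ε * (‖a‖^2 * ‖α‖) * R := by
          nlinarith [mul_nonneg (mul_nonneg hε.le (sq_nonneg ‖a‖)) (mul_nonneg hRpos.le (sub_nonneg.mpr hαlow)), hRpos, hε.le, sq_nonneg ‖a‖]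
        nlinarith [c2, c3]
      calc |(⟪φ x, φ y⟫ - ⟪x, y⟫)
            - (⟪a,y⟫/(‖a‖*‖α‖)) * (⟪φ x, α⟫ - ⟪a, x⟫)
            - (⟪a,x⟫/(‖a‖*‖α‖)) * (⟪φ y, α⟫ - ⟪a, y⟫)
            + 2 * (⟪a,x⟫ * ⟪a,y⟫ * (‖α‖ - ‖a‖)) / (‖a‖^2 * ‖α‖)|
          ≤ |(⟪φ x, φ y⟫ - ⟪x, y⟫)
            - (⟪a,y⟫/(‖a‖*‖α‖)) * (⟪φ x, α⟫ - ⟪a, x⟫)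
            - (⟪a,x⟫/(‖a‖*‖α‖)) * (⟪φ y, α⟫ - ⟪a, y⟫)|
            + |2 * (⟪a,x⟫ * ⟪a,y⟫ * (‖α‖ - ‖a‖)) / (‖a‖^2 * ‖α‖)| := abs_add_le _ _
        _ ≤ (|(⟪φ x, φ y⟫ - ⟪x, y⟫)
            - (⟪a,y⟫/(‖a‖*‖α‖)) * (⟪φ x, α⟫ - ⟪a, x⟫)|
            + |(⟪a,x⟫/(‖a‖*‖α‖)) * (⟪φ y, α⟫ - ⟪a, y⟫)|)
            + |2 * (⟪a,x⟫ * ⟪a,y⟫ * (‖α‖ - ‖a‖)) / (‖a‖^2 * ‖α‖)| := by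
            have := abs_sub (⟪φ x, φ y⟫ - ⟪x, y⟫
              - (⟪a,y⟫/(‖a‖*‖α‖)) * (⟪φ x, α⟫ - ⟪a, x⟫))
              ((⟪a,x⟫/(‖a‖*‖α‖)) * (⟪φ y, α⟫ - ⟪a, y⟫))
            linarith
        _ ≤ ((|⟪φ x, φ y⟫ - ⟪x, y⟫| + |(⟪a,y⟫/(‖a‖*‖α‖)) * (⟪φ x, α⟫ - ⟪a, x⟫)|)
            + |(⟪a,x⟫/(‖a‖*‖α‖)) * (⟪φ y, α⟫ - ⟪a, y⟫)|)
            + |2 * (⟪a,x⟫ * ⟪a,y⟫ * (‖α‖ - ‖a‖)) / (‖a‖^2 * ‖α‖)| := by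
            have := abs_sub (⟪φ x, φ y⟫ - ⟪x, y⟫)
              ((⟪a,y⟫/(‖a‖*‖α‖)) * (⟪φ x, α⟫ - ⟪a, x⟫))
            linarith
        _ ≤ 19 * ε := by linarith
    -- ψ' pair estimate
    have hψ'ψ' : ∀ x ∈ A, ∀ y ∈ A, |⟪ψ' x, ψ' y⟫ - ⟪w x, w y⟫| ≤ 20 * ε := by
      intro x hx y hy
      have hcor : ⟪ψ' x, ψ' y⟫ = ⟪ψ x, ψ y⟫ - ⟪ψ x, α⟫ * ⟪ψ y, α⟫ / ‖α‖^2 := by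
        show ⟪ψ x - (⟪α, ψ x⟫ / ‖α‖ ^ 2) • α, ψ y - (⟪α, ψ y⟫ / ‖α‖ ^ 2) • α⟫ = _
        rw [inner_expand (ψ x) (ψ y) α _ _, real_inner_comm (ψ x) α,
          real_inner_comm (ψ y) α]
        field_simp
        ring
      have hprod : |⟪ψ x, α⟫ * ⟪ψ y, α⟫ / ‖α‖^2| ≤ ε := by
        rw [abs_div, abs_of_pos (by positivity : (0:ℝ) < ‖α‖^2),
          div_le_iff₀ (by positivity : (0:ℝ) < ‖α‖^2), abs_mul]
        have c := mul_le_mul (hψα x hx) (hψα y hy) (abs_nonneg _) (by positivity)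
        have hα2 : (R/3)*(R/3) ≤ ‖α‖*‖α‖ :=
          mul_le_mul hαlow hαlow (by positivity) (norm_nonneg α)
        nlinarith [c, hα2, hε225, hε.le]
      have h19 := hψψ x hx y hy
      rw [hcor]
      have habs : |⟪ψ x, ψ y⟫ - ⟪ψ x, α⟫ * ⟪ψ y, α⟫ / ‖α‖ ^ 2 - ⟪w x, w y⟫|
          ≤ |⟪ψ x, ψ y⟫ - ⟪w x, w y⟫| + |⟪ψ x, α⟫ * ⟪ψ y, α⟫ / ‖α‖ ^ 2| := by
        have := abs_sub (⟪ψ x, ψ y⟫ - ⟪w x, w y⟫) (⟪ψ x, α⟫ * ⟪ψ y, α⟫ / ‖α‖ ^ 2)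
        have heq : ⟪ψ x, ψ y⟫ - ⟪ψ x, α⟫ * ⟪ψ y, α⟫ / ‖α‖ ^ 2 - ⟪w x, w y⟫
            = (⟪ψ x, ψ y⟫ - ⟪w x, w y⟫) - ⟪ψ x, α⟫ * ⟪ψ y, α⟫ / ‖α‖ ^ 2 := by ring
        rw [heq]
        linarith
      linarith
    -- fiber estimate
    have hfiber : ∀ x ∈ A, ∀ y ∈ A, w x = w y → ‖ψ' x - ψ' y‖ ≤ 9 * Real.sqrt ε := by
      intro x hx y hy hwxy
      have q1 := hψ'ψ' x hx x hx
      have q2 := hψ'ψ' x hx y hy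
      have q3 := hψ'ψ' y hy y hy
      rw [← hwxy] at q2 q3
      rw [abs_le] at q1 q2 q3
      refine sqLeImp (by positivity) ?_ (norm_nonneg _)
      have hexp : ‖ψ' x - ψ' y‖^2 = ‖ψ' x‖^2 - 2*⟪ψ' x, ψ' y⟫ + ‖ψ' y‖^2 :=
        norm_sub_sq_real _ _
      have e1 : ‖ψ' x‖^2 = ⟪ψ' x, ψ' x⟫ := (real_inner_self_eq_norm_sq _).symm
      have e2 : ‖ψ' y‖^2 = ⟪ψ' y, ψ' y⟫ := (real_inner_self_eq_norm_sq _).symm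
      have e3 : (9*Real.sqrt ε)^2 = 81*ε := by
        rw [mul_pow, hsq]; norm_num
      rw [hexp, e1, e2, e3]
      linarith [q1.2, q2.1, q3.2]
    -- ψ vs ψ'
    have hψmψ' : ∀ x ∈ A, ‖ψ x - ψ' x‖ ≤ Real.sqrt ε := by
      intro x hx
      have hdiff : ψ x - ψ' x = (⟪α, ψ x⟫ / ‖α‖ ^ 2) • α := by
        show ψ x - (ψ x - (⟪α, ψ x⟫ / ‖α‖ ^ 2) • α) = _
        rw [sub_sub_cancel]
      rw [hdiff, norm_smul, Real.norm_eq_abs, abs_div,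
        abs_of_pos (by positivity : (0:ℝ) < ‖α‖^2), div_mul_eq_mul_div,
        div_le_iff₀ (by positivity : (0:ℝ) < ‖α‖^2)]
      have hb : |⟪α, ψ x⟫| ≤ 5 * ε := by
        rw [real_inner_comm]; exact hψα x hx
      have k2 : 5*ε ≤ Real.sqrt ε * (R/3) := by nlinarith [hbase, hsε]
      have k1 : Real.sqrt ε * (R/3) ≤ Real.sqrt ε * ‖α‖ :=
        mul_le_mul_of_nonneg_left hαlow hsε.le
      nlinarith [hb, k1, k2, hαpos, norm_nonneg α, abs_nonneg (⟪α, ψ x⟫)]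
    -- recursion data
    haveI : Nonempty E := ⟨0⟩
    set σ : E → E := Function.invFunOn w A with hσdef
    set Atil : Set ↥E₂ := {z : ↥E₂ | (z : E) ∈ w '' A} with hAtildef
    set φt : ↥E₂ → ↥F₂ := fun z => ⟨ψ' (σ (z : E)), hψ'mem _⟩ with hφtdef
    have hwle : ∀ x : E, ‖w x‖ ≤ ‖x‖ := by
      intro x
      refine sqLeImp (norm_nonneg x) ?_ (norm_nonneg _)
      have hexp : ‖w x‖^2
          = ‖x‖^2 - 2*((⟪a,x⟫/‖a‖^2)*⟪x, a⟫) + (⟪a,x⟫/‖a‖^2)^2*‖a‖^2 := by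
        show ‖x - (⟪a, x⟫ / ‖a‖ ^ 2) • a‖^2 = _
        rw [norm_sub_sq_real, real_inner_smul_right, norm_smul, Real.norm_eq_abs,
          mul_pow, sq_abs]
      rw [hexp, real_inner_comm a x]
      have h1 : (⟪a,x⟫/‖a‖^2)^2*‖a‖^2 = ⟪a,x⟫^2/‖a‖^2 := by field_simp
      have h2 : (⟪a,x⟫/‖a‖^2)*⟪a,x⟫ = ⟪a,x⟫^2/‖a‖^2 := by field_simp
      rw [h1, h2]
      have h3 : (0:ℝ) ≤ ⟪a,x⟫^2/‖a‖^2 := by positivity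
      linarith
    have hnorm2 : ∀ z ∈ Atil, ‖z‖ ≤ R := by
      intro z hz
      obtain ⟨x, hx, hwx⟩ := hz
      have h1 : ‖(z : E)‖ ≤ R := by rw [← hwx]; exact (hwle x).trans (hnorm x hx)
      rwa [Submodule.norm_coe] at h1
    have hmem2 : ∀ z ∈ Atil, σ (z:E) ∈ A ∧ w (σ (z:E)) = (z:E) := by
      intro z hz
      have hz' : ∃ x ∈ A, w x = (z:E) := by obtain ⟨x, hx, hwx⟩ := hz; exact ⟨x, hx, hwx⟩
      exact ⟨Function.invFunOn_mem hz', Function.invFunOn_eq hz'⟩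
    have hip2 : ∀ z ∈ Atil, ∀ z' ∈ Atil, |⟪φt z, φt z'⟫ - ⟪z, z'⟫| ≤ 20 * ε := by
      intro z hz z' hz'
      obtain ⟨hσm, hσe⟩ := hmem2 z hz
      obtain ⟨hσm', hσe'⟩ := hmem2 z' hz'
      have hc1 : ⟪φt z, φt z'⟫ = ⟪ψ' (σ (z:E)), ψ' (σ (z':E))⟫ := by
        rw [Submodule.coe_inner]
      have hc2 : ⟪z, z'⟫ = ⟪w (σ (z:E)), w (σ (z':E))⟫ := by
        rw [Submodule.coe_inner, hσe, hσe']
      rw [hc1, hc2]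
      exact hψ'ψ' _ hσm _ hσm'
    have h20 : (0:ℝ) < 20*ε := by positivity
    have hR2 : R ≤ 2 ^ (N+1) * 15 * Real.sqrt (20*ε) := by
      refine hR.trans ?_
      have hs : Real.sqrt ε ≤ Real.sqrt (20*ε) := Real.sqrt_le_sqrt (by linarith)
      have h2N : (0:ℝ) ≤ 2 ^ (N+1) * 15 := by positivity
      nlinarith [hs, h2N]
    obtain ⟨U₂, hU₂⟩ := IH m' (by omega) (N+1) ↥E₂ ↥F₂ hdimE₂ hdimF₂ (20*ε) R h20
      Atil φt hnorm2 hR2 hip2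
    -- build the final isometry
    set W₀ : E →ₗ[ℝ] E := {
      toFun := w
      map_add' := by
        intro x y
        show (x + y) - (⟪a, x + y⟫ / ‖a‖ ^ 2) • a
          = (x - (⟪a,x⟫/‖a‖^2) • a) + (y - (⟪a,y⟫/‖a‖^2) • a)
        rw [inner_add_right, add_div, add_smul]
        abel
      map_smul' := by
        intro r x
        show (r • x) - (⟪a, r • x⟫ / ‖a‖ ^ 2) • a = r • (x - (⟪a,x⟫/‖a‖^2) • a)
        rw [real_inner_smul_right, smul_sub, smul_smul, mul_div_assoc] } with hW₀def
    set D₀ : E →ₗ[ℝ] F := {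
      toFun := fun x => (⟪a, x⟫ / (‖a‖ * ‖α‖)) • α
      map_add' := by
        intro x y
        show (⟪a, x + y⟫ / (‖a‖ * ‖α‖)) • α
          = (⟪a, x⟫ / (‖a‖ * ‖α‖)) • α + (⟪a, y⟫ / (‖a‖ * ‖α‖)) • α
        rw [inner_add_right, add_div, add_smul]
      map_smul' := by
        intro r x
        show (⟪a, r • x⟫ / (‖a‖ * ‖α‖)) • α = r • ((⟪a, x⟫ / (‖a‖ * ‖α‖)) • α)
        rw [real_inner_smul_right, mul_div_assoc, mul_smul] } with hD₀def
    set Lw : E →ₗ[ℝ] ↥E₂ := LinearMap.codRestrict E₂ W₀ hwmem with hLwdef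
    set T : E →ₗ[ℝ] F := D₀ + (F₂.subtype.comp ((U₂.toLinearEquiv.toLinearMap).comp Lw))
      with hTdef
    have hT : ∀ x : E, T x
        = (⟪a, x⟫ / (‖a‖ * ‖α‖)) • α + ((U₂ ⟨w x, hwmem x⟩ : ↥F₂) : F) := by
      intro x; rfl
    have hwsq : ∀ x : E, ‖w x‖^2 = ‖x‖^2 - ⟪a,x⟫^2/‖a‖^2 := by
      intro x
      have hexp : ‖w x‖^2
          = ‖x‖^2 - 2*((⟪a,x⟫/‖a‖^2)*⟪x, a⟫) + (⟪a,x⟫/‖a‖^2)^2*‖a‖^2 := by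
        show ‖x - (⟪a, x⟫ / ‖a‖ ^ 2) • a‖^2 = _
        rw [norm_sub_sq_real, real_inner_smul_right, norm_smul, Real.norm_eq_abs,
          mul_pow, sq_abs]
      rw [hexp, real_inner_comm a x]
      field_simp
      ring
    have hTnorm : ∀ x : E, ‖T x‖ = ‖x‖ := by
      intro x
      have horth : ⟪(⟪a, x⟫ / (‖a‖ * ‖α‖)) • α, ((U₂ ⟨w x, hwmem x⟩ : ↥F₂) : F)⟫ = 0 := by
        rw [real_inner_smul_left]
        have hm := (U₂ ⟨w x, hwmem x⟩).2
        rw [Submodule.mem_orthogonal_singleton_iff_inner_right.mp hm, mul_zero]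
      have hsq1 : ‖(⟪a, x⟫ / (‖a‖ * ‖α‖)) • α + ((U₂ ⟨w x, hwmem x⟩ : ↥F₂) : F)‖^2
          = ‖(⟪a, x⟫ / (‖a‖ * ‖α‖)) • α‖^2 + ‖((U₂ ⟨w x, hwmem x⟩ : ↥F₂) : F)‖^2 := by
        rw [norm_add_sq_real, horth]
        ring
      have hn1 : ‖(⟪a, x⟫ / (‖a‖ * ‖α‖)) • α‖^2 = ⟪a,x⟫^2/‖a‖^2 := by
        rw [norm_smul, Real.norm_eq_abs, mul_pow, sq_abs]
        field_simp
      have hn2 : ‖((U₂ ⟨w x, hwmem x⟩ : ↥F₂) : F)‖ = ‖w x‖ := by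
        rw [Submodule.norm_coe, LinearIsometryEquiv.norm_map]
        exact (Submodule.norm_coe _).symm
      have hfin : ‖T x‖^2 = ‖x‖^2 := by
        rw [hT x, hsq1, hn1, hn2, hwsq x]
        ring
      exact le_antisymm (sqLeImp (norm_nonneg x) (le_of_eq hfin) (norm_nonneg _))
        (sqLeImp (norm_nonneg _) (le_of_eq hfin.symm) (norm_nonneg x))
    set li : E →ₗᵢ[ℝ] F := ⟨T, hTnorm⟩ with hlidef
    have hsurj : Function.Surjective li := by
      have hinj : Function.Injective li.toLinearMap := li.injective
      exact (LinearMap.injective_iff_surjective_of_finrank_eq_finrank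
        (by rw [hE, hF])).mp hinj
    refine ⟨LinearIsometryEquiv.ofSurjective li hsurj, fun x hx => ?_⟩
    have hUx : (LinearIsometryEquiv.ofSurjective li hsurj) x = T x := by
      have hc := LinearIsometryEquiv.coe_ofSurjective li hsurj
      rw [show (LinearIsometryEquiv.ofSurjective li hsurj) x = li x from congrFun hc x]
      rfl
    have hz : (⟨w x, hwmem x⟩ : ↥E₂) ∈ Atil := ⟨x, hx, rfl⟩
    have hyA : σ (w x) ∈ A := (hmem2 _ hz).1
    have hwyx : w (σ (w x)) = w x := (hmem2 _ hz).2
    have hrec := hU₂ _ hz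
    have hd1 : (LinearIsometryEquiv.ofSurjective li hsurj) x - φ x
        = (((U₂ ⟨w x, hwmem x⟩ : ↥F₂) : F) - ψ' (σ (w x)))
          + ((ψ' (σ (w x)) - ψ' x) + (ψ' x - ψ x)) := by
      rw [hUx, hT x]
      have hψx : ψ x = φ x - (⟪a, x⟫ / (‖a‖ * ‖α‖)) • α := rfl
      rw [hψx]
      abel
    rw [hd1]
    have hb1 : ‖((U₂ ⟨w x, hwmem x⟩ : ↥F₂) : F) - ψ' (σ (w x))‖
        ≤ Ccst m' * Real.sqrt (20*ε) := by
      have hcoe : ((U₂ ⟨w x, hwmem x⟩ : ↥F₂) : F) - ψ' (σ (w x))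
          = ((U₂ ⟨w x, hwmem x⟩ - φt ⟨w x, hwmem x⟩ : ↥F₂) : F) := by
        rw [Submodule.coe_sub]
      rw [hcoe, Submodule.norm_coe]
      exact hrec
    have hb2 : ‖ψ' (σ (w x)) - ψ' x‖ ≤ 9 * Real.sqrt ε := hfiber _ hyA x hx hwyx
    have hb3 : ‖ψ' x - ψ x‖ ≤ Real.sqrt ε := by
      rw [norm_sub_rev]; exact hψmψ' x hx
    have htri : ‖(((U₂ ⟨w x, hwmem x⟩ : ↥F₂) : F) - ψ' (σ (w x)))
        + ((ψ' (σ (w x)) - ψ' x) + (ψ' x - ψ x))‖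
        ≤ ‖((U₂ ⟨w x, hwmem x⟩ : ↥F₂) : F) - ψ' (σ (w x))‖
          + (‖ψ' (σ (w x)) - ψ' x‖ + ‖ψ' x - ψ x‖) :=
      (norm_add_le _ _).trans (by gcongr; exact norm_add_le _ _)
    have h20s : Real.sqrt (20*ε) ≤ 5 * Real.sqrt ε := by
      rw [Real.sqrt_mul (by norm_num : (0:ℝ) ≤ 20)]
      have h5 : Real.sqrt 20 ≤ 5 := by
        have : (20:ℝ) ≤ 5^2 := by norm_num
        calc Real.sqrt 20 ≤ Real.sqrt (5^2) := Real.sqrt_le_sqrt this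
          _ = 5 := Real.sqrt_sq (by norm_num)
      nlinarith [Real.sqrt_nonneg ε, Real.sqrt_nonneg 20]
    have hCm' : (0:ℝ) < Ccst m' := lt_of_lt_of_le (by norm_num) (Ccst_ge m')
    have hCeq : Ccst (m'+1) = 8 * Ccst m' + 17 := rfl
    rw [hCeq]
    have hfin1 : Ccst m' * Real.sqrt (20*ε) ≤ Ccst m' * (5 * Real.sqrt ε) :=
      mul_le_mul_of_nonneg_left h20s hCm'.le
    calc ‖(((U₂ ⟨w x, hwmem x⟩ : ↥F₂) : F) - ψ' (σ (w x)))
        + ((ψ' (σ (w x)) - ψ' x) + (ψ' x - ψ x))‖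
        ≤ ‖((U₂ ⟨w x, hwmem x⟩ : ↥F₂) : F) - ψ' (σ (w x))‖
          + (‖ψ' (σ (w x)) - ψ' x‖ + ‖ψ' x - ψ x‖) := htri
      _ ≤ Ccst m' * Real.sqrt (20*ε) + (9 * Real.sqrt ε + Real.sqrt ε) := by
          gcongr
      _ ≤ (8 * Ccst m' + 17) * Real.sqrt ε := by
          nlinarith [hfin1, hCm', hsε.le]

set_option maxHeartbeats 1000000 in
/-- Alestalo–Trotsenko–Väisälä: a δ-isometry between compacta of
diameter ≤ D in ℝⁿ is uniformly C₂√δ-close to the restriction of a global isometry of ℝⁿ. -/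
theorem stmt4 (n : ℕ) (hn : 1 ≤ n) (D : ℝ) (hD : 0 < D) :
    ∃ C₂ : ℝ, 0 < C₂ ∧ ∀ δ : ℝ, 0 < δ →
      ∀ A B : Set (EuclideanSpace ℝ (Fin n)), A.Nonempty → B.Nonempty →
        IsCompact A → IsCompact B → Metric.diam A ≤ D → Metric.diam B ≤ D →
        ∀ f : A ≃ₜ B, (∀ x y : A, |dist (f x) (f y) - dist x y| < δ) →
          ∃ g : EuclideanSpace ℝ (Fin n) ≃ᵢ EuclideanSpace ℝ (Fin n),
            ∀ x : A, ‖g (x : EuclideanSpace ℝ (Fin n)) - ((f x : B) : EuclideanSpace ℝ (Fin n))‖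
              ≤ C₂ * Real.sqrt δ := by
  classical
  refine ⟨Ccst n * Real.sqrt (5 * D) + 2 * Real.sqrt D, ?_, ?_⟩
  · have h1 : 0 ≤ Ccst n * Real.sqrt (5 * D) :=
      mul_nonneg (Ccst_pos n).le (Real.sqrt_nonneg _)
    have h2 : 0 < Real.sqrt D := Real.sqrt_pos.mpr hD
    linarith
  intro δ hδ A B hAne hBne hAc hBc hdA hdB f hf
  obtain ⟨a₀, ha₀⟩ := hAne
  set b0 : EuclideanSpace ℝ (Fin n) := ((f ⟨a₀, ha₀⟩ : B) : EuclideanSpace ℝ (Fin n)) with hb0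
  have hdistB : ∀ x y : A, ‖((f x : B) : EuclideanSpace ℝ (Fin n))
      - ((f y : B) : EuclideanSpace ℝ (Fin n))‖ ≤ D := by
    intro x y
    rw [← dist_eq_norm]
    exact (dist_le_diam_of_mem hBc.isBounded (f x).2 (f y).2).trans hdB
  have hdistA : ∀ x y : A, ‖(x : EuclideanSpace ℝ (Fin n)) - (y : EuclideanSpace ℝ (Fin n))‖
      ≤ D := by
    intro x y
    rw [← dist_eq_norm]
    exact (dist_le_diam_of_mem hAc.isBounded x.2 y.2).trans hdA
  have hfd : ∀ x y : A, |‖((f x : B) : EuclideanSpace ℝ (Fin n))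
      - ((f y : B) : EuclideanSpace ℝ (Fin n))‖
      - ‖(x : EuclideanSpace ℝ (Fin n)) - (y : EuclideanSpace ℝ (Fin n))‖| ≤ δ := by
    intro x y
    have h := (hf x y).le
    rw [Subtype.dist_eq, Subtype.dist_eq, dist_eq_norm, dist_eq_norm] at h
    exact h
  -- squared-norm distortion
  have hsq : ∀ x y : A,
      |‖((f x : B) : EuclideanSpace ℝ (Fin n)) - ((f y : B) : EuclideanSpace ℝ (Fin n))‖ ^ 2
        - ‖(x : EuclideanSpace ℝ (Fin n)) - (y : EuclideanSpace ℝ (Fin n))‖ ^ 2|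
        ≤ 3 * D * δ := by
    intro x y
    have h1 := hfd x y
    have h2 := hdistB x y
    have h3 := hdistA x y
    have hn1 : (0:ℝ) ≤ ‖((f x : B) : EuclideanSpace ℝ (Fin n))
        - ((f y : B) : EuclideanSpace ℝ (Fin n))‖ := norm_nonneg _
    have hn2 : (0:ℝ) ≤ ‖(x : EuclideanSpace ℝ (Fin n)) - (y : EuclideanSpace ℝ (Fin n))‖ :=
      norm_nonneg _
    rw [abs_le] at h1 ⊢
    constructor <;> nlinarith [h1.1, h1.2, hδ.le, mul_nonneg hδ.le hn1, mul_nonneg hδ.le hn2]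
  by_cases hcase : δ ≤ D
  · -- main case via keyLemma
    set ε : ℝ := 5 * D * δ with hε
    have hεpos : 0 < ε := by positivity
    set Aset : Set (EuclideanSpace ℝ (Fin n)) := (fun x => x - a₀) '' A with hAset
    set φ : EuclideanSpace ℝ (Fin n) → EuclideanSpace ℝ (Fin n) :=
      fun z => if h : z + a₀ ∈ A then ((f ⟨z + a₀, h⟩ : B) : EuclideanSpace ℝ (Fin n)) - b0
        else 0 with hφdef
    have hφ : ∀ x (hx : x ∈ A),
        φ (x - a₀) = ((f ⟨x, hx⟩ : B) : EuclideanSpace ℝ (Fin n)) - b0 := by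
      intro x hx
      have hx' : x - a₀ + a₀ ∈ A := by rwa [sub_add_cancel]
      have h1 : φ (x - a₀) = ((f ⟨x - a₀ + a₀, hx'⟩ : B) : EuclideanSpace ℝ (Fin n)) - b0 :=
        dif_pos hx'
      have hxx : (⟨x - a₀ + a₀, hx'⟩ : A) = ⟨x, hx⟩ := Subtype.ext (sub_add_cancel x a₀)
      rw [h1]
      exact congrArg (fun t : A => ((f t : B) : EuclideanSpace ℝ (Fin n)) - b0) hxx
    -- inner product distortion on Aset
    have hip : ∀ z ∈ Aset, ∀ z' ∈ Aset, |⟪φ z, φ z'⟫ - ⟪z, z'⟫| ≤ ε := by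
      rintro z ⟨x, hx, rfl⟩ z' ⟨y, hy, rfl⟩
      simp only
      rw [hφ x hx, hφ y hy]
      set u : EuclideanSpace ℝ (Fin n) := ((f ⟨x, hx⟩ : B) : EuclideanSpace ℝ (Fin n)) - b0
        with hu
      set v : EuclideanSpace ℝ (Fin n) := ((f ⟨y, hy⟩ : B) : EuclideanSpace ℝ (Fin n)) - b0
        with hv
      have huv : u - v = ((f ⟨x, hx⟩ : B) : EuclideanSpace ℝ (Fin n))
          - ((f ⟨y, hy⟩ : B) : EuclideanSpace ℝ (Fin n)) := by
        rw [hu, hv]; abel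
      have hzz : (x - a₀) - (y - a₀) = x - y := by abel
      have e1 : ‖u - v‖ ^ 2 = ‖u‖ ^ 2 - 2 * ⟪u, v⟫ + ‖v‖ ^ 2 := norm_sub_sq_real u v
      have e2 : ‖(x - a₀) - (y - a₀)‖ ^ 2 =
          ‖x - a₀‖ ^ 2 - 2 * ⟪x - a₀, y - a₀⟫ + ‖y - a₀‖ ^ 2 := norm_sub_sq_real _ _
      have b1 : |‖u‖ ^ 2 - ‖x - a₀‖ ^ 2| ≤ 3 * D * δ := hsq ⟨x, hx⟩ ⟨a₀, ha₀⟩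
      have b2 : |‖v‖ ^ 2 - ‖y - a₀‖ ^ 2| ≤ 3 * D * δ := hsq ⟨y, hy⟩ ⟨a₀, ha₀⟩
      have b3 : |‖u - v‖ ^ 2 - ‖(x - a₀) - (y - a₀)‖ ^ 2| ≤ 3 * D * δ := by
        rw [huv, hzz]
        exact hsq ⟨x, hx⟩ ⟨y, hy⟩
      rw [abs_le] at b1 b2 b3 ⊢
      have hDδ : 0 ≤ D * δ := by positivity
      constructor <;> linarith [b1.1, b1.2, b2.1, b2.2, b3.1, b3.2]
    -- norm bound on Aset
    have hnormA : ∀ z ∈ Aset, ‖z‖ ≤ D := by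
      rintro z ⟨x, hx, rfl⟩
      exact hdistA ⟨x, hx⟩ ⟨a₀, ha₀⟩
    -- choose N
    have hsε : 0 < 15 * Real.sqrt ε := by positivity
    obtain ⟨N, hN⟩ := pow_unbounded_of_one_lt (y := (2:ℝ)) (D / (15 * Real.sqrt ε))
      one_lt_two
    have hRN : D ≤ 2 ^ N * 15 * Real.sqrt ε := by
      rw [div_lt_iff₀ hsε] at hN
      rw [mul_assoc]
      exact hN.le
    obtain ⟨U, hU⟩ := keyLemma n N (EuclideanSpace ℝ (Fin n)) (EuclideanSpace ℝ (Fin n))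
      finrank_euclideanSpace_fin finrank_euclideanSpace_fin ε D hεpos Aset φ hnormA hRN hip
    refine ⟨((IsometryEquiv.subRight a₀).trans U.toIsometryEquiv).trans
      (IsometryEquiv.addRight b0), ?_⟩
    intro x
    have hz : (x : EuclideanSpace ℝ (Fin n)) - a₀ ∈ Aset := ⟨x, x.2, rfl⟩
    have hb := hU _ hz
    have hφx : φ ((x : EuclideanSpace ℝ (Fin n)) - a₀)
        = ((f x : B) : EuclideanSpace ℝ (Fin n)) - b0 := hφ (x : EuclideanSpace ℝ (Fin n)) x.2
    rw [hφx] at hb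
    have hgx : (((IsometryEquiv.subRight a₀).trans U.toIsometryEquiv).trans
        (IsometryEquiv.addRight b0)) (x : EuclideanSpace ℝ (Fin n))
        = U ((x : EuclideanSpace ℝ (Fin n)) - a₀) + b0 := rfl
    rw [hgx]
    have heq : U ((x : EuclideanSpace ℝ (Fin n)) - a₀) + b0 - ((f x : B) : EuclideanSpace ℝ (Fin n))
        = U ((x : EuclideanSpace ℝ (Fin n)) - a₀)
          - (((f x : B) : EuclideanSpace ℝ (Fin n)) - b0) := by abel
    rw [heq]
    refine hb.trans ?_
    have hsplit : Real.sqrt ε = Real.sqrt (5 * D) * Real.sqrt δ := by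
      rw [hε]; exact Real.sqrt_mul (by positivity) δ
    rw [hsplit, ← mul_assoc]
    have h2 : 0 ≤ 2 * Real.sqrt D * Real.sqrt δ := by positivity
    nlinarith [h2]
  · -- trivial translation case
    push_neg at hcase
    refine ⟨(IsometryEquiv.subRight a₀).trans (IsometryEquiv.addRight b0), ?_⟩
    intro x
    have hgx : ((IsometryEquiv.subRight a₀).trans (IsometryEquiv.addRight b0))
        (x : EuclideanSpace ℝ (Fin n)) = (x : EuclideanSpace ℝ (Fin n)) - a₀ + b0 := rfl
    rw [hgx]
    have h1 : ‖(x : EuclideanSpace ℝ (Fin n)) - a₀ + b0 - ((f x : B) : EuclideanSpace ℝ (Fin n))‖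
        ≤ ‖(x : EuclideanSpace ℝ (Fin n)) - a₀‖
          + ‖b0 - ((f x : B) : EuclideanSpace ℝ (Fin n))‖ := by
      have heq : (x : EuclideanSpace ℝ (Fin n)) - a₀ + b0 - ((f x : B) : EuclideanSpace ℝ (Fin n))
          = ((x : EuclideanSpace ℝ (Fin n)) - a₀)
            + (b0 - ((f x : B) : EuclideanSpace ℝ (Fin n))) := by abel
      rw [heq]; exact norm_add_le _ _
    have h2 : ‖(x : EuclideanSpace ℝ (Fin n)) - a₀‖ ≤ D := hdistA x ⟨a₀, ha₀⟩
    have h3 : ‖b0 - ((f x : B) : EuclideanSpace ℝ (Fin n))‖ ≤ D := hdistB ⟨a₀, ha₀⟩ x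
    have h4 : 2 * D ≤ 2 * Real.sqrt D * Real.sqrt δ := by
      have hDD : D = Real.sqrt D * Real.sqrt D := (Real.mul_self_sqrt hD.le).symm
      have hle : Real.sqrt D ≤ Real.sqrt δ := Real.sqrt_le_sqrt hcase.le
      nlinarith [Real.sqrt_nonneg D, Real.sqrt_nonneg δ]
    have h5 : 0 ≤ Ccst n * Real.sqrt (5 * D) * Real.sqrt δ := by
      have := (Ccst_pos n).le
      positivity
    calc ‖(x : EuclideanSpace ℝ (Fin n)) - a₀ + b0 - ((f x : B) : EuclideanSpace ℝ (Fin n))‖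
        ≤ 2 * D := by linarith
      _ ≤ (Ccst n * Real.sqrt (5 * D) + 2 * Real.sqrt D) * Real.sqrt δ := by
          rw [add_mul]; linarith

end
end

section
/- Let K be the space of nonempty compact convex subsets of ℝ³ with the Hausdorff metric, on which the group Iso(ℝ³) of surjective isometries of ℝ³ acts by g·D = g(D), and let K_s = {D ∈ K : s(D) = 0} on which O(3) acts by g·D = g(D). The map r : K → K_s, r(D) = D − s(D) = {x − s(D) : x ∈ D}, sends each Iso(ℝ³)-orbit into a single O(3)-orbit, and the induced map of orbit spaces K/Iso(ℝ³) → K_s/O(3) (both with quotient topologies) is a homeomorphism; moreover r preserves affine dimension. -/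
open Metric Set MeasureTheory

noncomputable section

abbrev E3 : Type := EuclideanSpace ℝ (Fin 3)

/-- A convex body in ℝ³: a compact convex set with nonempty interior. -/
def IsConvexBody (K : Set E3) : Prop :=
  IsCompact K ∧ Convex ℝ K ∧ (interior K).Nonempty

/-- The boundary (intrinsic) distance on the frontier of `K`: the infimum of
lengths (total variation) of continuous paths in `frontier K` joining `x` to `y`. -/
def bdryDist (K : Set E3) (x y : E3) : ENNReal :=
  sInf {L | ∃ γ : ℝ → E3, ContinuousOn γ (Icc 0 1) ∧ γ 0 = x ∧ γ 1 = y ∧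
    (∀ t ∈ Icc (0:ℝ) 1, γ t ∈ frontier K) ∧ L = eVariationOn γ (Icc 0 1)}

/-- `φ` exhibits the metric space `X` as the boundary surface `(∂K, d_K)`. -/
def IsBdryChart (K : Set E3) {X : Type} [MetricSpace X] (φ : X ≃ frontier K) : Prop :=
  ∀ x y : X, dist x y = (bdryDist K (φ x : E3) (φ y : E3)).toReal

/-- `X` is (a metric space isometric to) the boundary surface `(∂K, d_K)`. -/
def IsBdrySurface (K : Set E3) (X : Type) [MetricSpace X] : Prop :=
  ∃ φ : X ≃ frontier K, IsBdryChart K φ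

/-- A metric space is intrinsic if every pair of points has a midpoint. -/
def IsIntrinsic (X : Type) [MetricSpace X] : Prop :=
  ∀ x y : X, ∃ z : X, dist x z = dist x y / 2 ∧ dist z y = dist x y / 2

/-- The comparison angle at `p` subtended by `x, y`. -/
def cmpAngle {X : Type} [MetricSpace X] (p x y : X) : ℝ :=
  Real.arccos ((dist p x ^ 2 + dist p y ^ 2 - dist x y ^ 2) / (2 * dist p x * dist p y))

/-- Curvature ≥ 0 in the comparison sense. -/
def NonnegCurv (X : Type) [MetricSpace X] : Prop :=
  ∀ p a b c : X, a ≠ p → b ≠ p → c ≠ p →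
    cmpAngle p a b + cmpAngle p b c + cmpAngle p c a ≤ 2 * Real.pi

/-- The unit 2-sphere in ℝ³. -/
def S2 : Set E3 := sphere (0 : E3) 1

/-- Affine dimension of a subset of ℝ³. -/
def affDim (K : Set E3) : ℕ :=
  Module.finrank ℝ (affineSpan ℝ K).direction

/-- The relative boundary of `K`: its frontier inside its affine span. -/
def relBoundary (K : Set E3) : Set E3 :=
  Subtype.val '' frontier ((Subtype.val : (affineSpan ℝ K : Set E3) → E3) ⁻¹' K)

/-- Length `‖x−z₁‖ + ‖z₁−z₂‖ + ⋯ + ‖z_k−y‖` of the chain `x, z₁, …, z_k, y`. -/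
def chainLen : E3 → E3 → List E3 → ℝ
  | x, y, [] => dist x y
  | x, y, z :: L => dist x z + chainLen z y L

/-- The pseudodistance of the double `DK`: infimum over chains of points of the relative
boundary of `K`, with evenly many points between points on the same side of the double
and oddly many points between points on different sides. -/
def doubleDist (K : Set E3) (p q : E3 × Bool) : ℝ :=
  sInf {c | ∃ L : List E3, (∀ z ∈ L, z ∈ relBoundary K) ∧
    (if p.2 = q.2 then Even L.length else Odd L.length) ∧ c = chainLen p.1 q.1 L}

/-- The metric space `X` is the double `DK` of `K`: the metric quotient of
`K × {0,1}` by the pseudometric `doubleDist`. -/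
def IsDoubleOf (K : Set E3) (X : Type) [MetricSpace X] : Prop :=
  ∃ q : K × Bool → X, Function.Surjective q ∧
    ∀ a b : K × Bool, dist (q a) (q b) = doubleDist K ((a.1 : E3), a.2) ((b.1 : E3), b.2)

/-- The support function of `K ⊂ ℝ³`. -/
def suppFn (K : Set E3) (u : E3) : ℝ := sSup ((fun x => inner ℝ x u : E3 → ℝ) '' K)

/-- The rotation-invariant probability measure on the unit sphere `S² ⊂ ℝ³`. -/
def sphereProb : Measure (sphere (0 : E3) 1) :=
  ((volume : Measure E3).toSphere Set.univ)⁻¹ • (volume : Measure E3).toSphere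

/-- The Steiner point `s(K) = 3∫_{S²} h_K(u)·u dσ(u)` of a convex compactum `K ⊂ ℝ³`. -/
def steinerPoint (K : Set E3) : E3 :=
  (3 : ℝ) • ∫ u : sphere (0 : E3) 1, suppFn K (u : E3) • (u : E3) ∂sphereProb

open TopologicalSpace in
/-- The hyperspace `K` of nonempty compact convex subsets of ℝ³ with the Hausdorff metric. -/
def KvSet : Set (NonemptyCompacts E3) := {D | Convex ℝ (D : Set E3)}

open TopologicalSpace in
/-- The hyperspace `K_s` of nonempty compact convex subsets of ℝ³ with Steiner point at the
origin, with the Hausdorff metric. -/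
def KsSet : Set (NonemptyCompacts E3) :=
  {D | Convex ℝ (D : Set E3) ∧ steinerPoint (D : Set E3) = 0}

/-- The `Iso(ℝ³)`-orbit equivalence on `K`, where `Iso(ℝ³)` acts by `g·D = g(D)`. -/
def IsoRel (a b : KvSet) : Prop :=
  ∃ g : E3 ≃ᵢ E3, g '' (a.1 : Set E3) = (b.1 : Set E3)

/-- The `O(3)`-orbit equivalence on `K_s`, where `O(3)` acts by `g·D = g(D)`. -/
def OrthRel (a b : KsSet) : Prop :=
  ∃ g : E3 ≃ₗᵢ[ℝ] E3, g '' (a.1 : Set E3) = (b.1 : Set E3)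


open Pointwise

instance : IsProbabilityMeasure sphereProb := by
  constructor
  have h1 : (volume : Measure E3).toSphere Set.univ ≠ 0 := by
    rw [Measure.toSphere_apply_univ]
    exact mul_ne_zero (by simp [finrank_euclideanSpace]) (measure_ball_pos volume (0:E3) one_pos).ne'
  have h2 : (volume : Measure E3).toSphere Set.univ ≠ ⊤ := measure_ne_top _ _
  rw [sphereProb, Measure.smul_apply, smul_eq_mul, ENNReal.inv_mul_cancel h1 h2]

/-- restriction of a linear isometry equivalence to the unit sphere -/
def sphereMap (g : E3 ≃ₗᵢ[ℝ] E3) : sphere (0:E3) 1 → sphere (0:E3) 1 :=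
  fun u => ⟨g u, by simp [mem_sphere, dist_zero_right, u.2.out]⟩

lemma continuous_sphereMap (g : E3 ≃ₗᵢ[ℝ] E3) : Continuous (sphereMap g) :=
  Continuous.subtype_mk (g.continuous.comp continuous_subtype_val) _

lemma val_preimage_sphereMap (g : E3 ≃ₗᵢ[ℝ] E3) (s : Set (sphere (0:E3) 1)) :
    Subtype.val '' (sphereMap g ⁻¹' s) = g.symm '' (Subtype.val '' s) := by
  ext x
  constructor
  · rintro ⟨u, hu, rfl⟩
    exact ⟨g u, ⟨sphereMap g u, hu, rfl⟩, by simp⟩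
  · rintro ⟨y, ⟨v, hv, rfl⟩, rfl⟩
    refine ⟨⟨g.symm v, by simp [mem_sphere, dist_zero_right, v.2.out]⟩, ?_, rfl⟩
    have : sphereMap g ⟨g.symm (v:E3), by simp [mem_sphere, dist_zero_right, v.2.out]⟩ = v := by
      apply Subtype.ext; simp [sphereMap]
    simpa [this] using hv

lemma smul_set_image_linear (g : E3 ≃ₗᵢ[ℝ] E3) (I : Set ℝ) (A : Set E3) :
    I • (g '' A) = g '' (I • A) := by
  ext x
  simp only [mem_smul_set, Set.mem_image]
  constructor
  · rintro ⟨r, hr, y, ⟨a, ha, rfl⟩, rfl⟩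
    exact ⟨r • a, ⟨r, hr, a, ha, rfl⟩, by simp⟩
  · rintro ⟨y, ⟨r, hr, a, ha, rfl⟩, rfl⟩
    exact ⟨r, hr, g a, ⟨a, ha, rfl⟩, by simp⟩

lemma toSphere_map (g : E3 ≃ₗᵢ[ℝ] E3) :
    Measure.map (sphereMap g) (volume : Measure E3).toSphere = (volume : Measure E3).toSphere := by
  ext s hs
  rw [Measure.map_apply (continuous_sphereMap g).measurable hs,
    Measure.toSphere_apply' _ (hs.preimage (continuous_sphereMap g).measurable),
    Measure.toSphere_apply' _ hs, val_preimage_sphereMap,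
    smul_set_image_linear g.symm]
  congr 1
  have him : ⇑g.symm '' (Ioo (0:ℝ) 1 • (Subtype.val '' s)) = g ⁻¹' (Ioo (0:ℝ) 1 • (Subtype.val '' s)) := by
    ext z
    constructor
    · rintro ⟨y, hy, rfl⟩; simpa using hy
    · intro hz; exact ⟨g z, hz, by simp⟩
  rw [him]
  exact g.measurePreserving.measure_preimage_emb
    (g.toHomeomorph.measurableEmbedding) _
lemma sphereProb_map (g : E3 ≃ₗᵢ[ℝ] E3) :
    Measure.map (sphereMap g) sphereProb = sphereProb := by
  rw [sphereProb, Measure.map_smul, toSphere_map]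

section integrals
variable {F : Type*} [NormedAddCommGroup F] [NormedSpace ℝ F]

lemma cont_integrable (f : sphere (0:E3) 1 → F) (hf : Continuous f) :
    Integrable f sphereProb :=
  hf.integrable_of_hasCompactSupport
    (IsCompact.of_isClosed_subset isCompact_univ (isClosed_tsupport f) (subset_univ _))

def sphereHomeo (g : E3 ≃ₗᵢ[ℝ] E3) : sphere (0:E3) 1 ≃ₜ sphere (0:E3) 1 where
  toFun := sphereMap g
  invFun := sphereMap g.symm
  left_inv := fun u => Subtype.ext (by simp [sphereMap])
  right_inv := fun u => Subtype.ext (by simp [sphereMap])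
  continuous_toFun := continuous_sphereMap g
  continuous_invFun := continuous_sphereMap g.symm

lemma integral_sphereMap (g : E3 ≃ₗᵢ[ℝ] E3) (f : sphere (0:E3) 1 → F) :
    ∫ u, f (sphereMap g u) ∂sphereProb = ∫ u, f u ∂sphereProb :=
  (MeasurePreserving.mk (continuous_sphereMap g).measurable (sphereProb_map g)).integral_comp
    (sphereHomeo g).measurableEmbedding f

/-- second moments -/
def mom (i j : Fin 3) : ℝ := ∫ u : sphere (0:E3) 1, (u:E3) i * (u:E3) j ∂sphereProb

lemma cont_coord (i : Fin 3) : Continuous (fun u : sphere (0:E3) 1 => (u:E3) i) :=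
  ((EuclideanSpace.proj i).continuous).comp continuous_subtype_val

/-- negation of the i-th coordinate as a linear isometry equivalence -/
def negCoord (i : Fin 3) : E3 ≃ₗᵢ[ℝ] E3 :=
  LinearIsometryEquiv.piLpCongrRight 2 (fun k => if k = i then LinearIsometryEquiv.neg ℝ else LinearIsometryEquiv.refl ℝ ℝ)

lemma negCoord_apply (i k : Fin 3) (x : E3) :
    (negCoord i x) k = if k = i then -(x k) else x k := by
  by_cases h : k = i
  · subst h; simp [negCoord, LinearIsometryEquiv.piLpCongrRight]
  · simp [negCoord, LinearIsometryEquiv.piLpCongrRight, h]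

/-- coordinate swap as a linear isometry equivalence -/
def swapCoord (i j : Fin 3) : E3 ≃ₗᵢ[ℝ] E3 :=
  LinearIsometryEquiv.piLpCongrLeft 2 ℝ ℝ (Equiv.swap i j)

lemma swapCoord_apply (i j k : Fin 3) (x : E3) :
    (swapCoord i j x) k = x (Equiv.swap i j k) := by
  simp [swapCoord, LinearIsometryEquiv.piLpCongrLeft_apply, Equiv.piCongrLeft'_apply,
    Equiv.swap_apply_def]

lemma mom_off (i j : Fin 3) (hij : i ≠ j) : mom i j = 0 := by
  have h := integral_sphereMap (negCoord i) (fun u => (u:E3) i * (u:E3) j)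
  have e : ∀ u : sphere (0:E3) 1,
      ((sphereMap (negCoord i) u : E3) i) * ((sphereMap (negCoord i) u : E3) j)
        = -(((u:E3) i) * ((u:E3) j)) := by
    intro u
    simp [sphereMap, negCoord_apply, hij.symm]
  rw [funext e, integral_neg] at h
  unfold mom
  linarith

lemma mom_diag (i j : Fin 3) : mom i i = mom j j := by
  have h := integral_sphereMap (swapCoord i j) (fun u => (u:E3) i * (u:E3) i)
  have e : ∀ u : sphere (0:E3) 1,
      ((sphereMap (swapCoord i j) u : E3) i) * ((sphereMap (swapCoord i j) u : E3) i)
        = ((u:E3) j) * ((u:E3) j) := by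
    intro u
    simp only [sphereMap, swapCoord_apply]
    rw [Equiv.swap_apply_left]
  rw [funext e] at h
  exact h.symm

lemma hint_mom (i j : Fin 3) : Integrable (fun u : sphere (0:E3) 1 => (u:E3) i * (u:E3) j) sphereProb :=
  cont_integrable _ ((cont_coord i).mul (cont_coord j))

lemma mom_sum : mom 0 0 + mom 1 1 + mom 2 2 = 1 := by
  have h1 := integral_finset_sum (μ := sphereProb) Finset.univ
    (f := fun (i : Fin 3) (u : sphere (0:E3) 1) => (u:E3) i * (u:E3) i) (fun i _ => hint_mom i i)
  have h2 : ∀ u : sphere (0:E3) 1, ∑ i : Fin 3, (u:E3) i * (u:E3) i = 1 := by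
    intro u
    have hu : ‖(u:E3)‖ = 1 := by simpa [dist_zero_right] using u.2.out
    have h3 : (inner ℝ (u:E3) (u:E3) : ℝ) = ∑ i : Fin 3, (u:E3) i * (u:E3) i := by
      rw [PiLp.inner_apply]; simp [RCLike.inner_apply, sq]
    rw [← h3, real_inner_self_eq_norm_sq, hu]; norm_num
  simp only [h2, integral_const, measure_univ, probReal_univ, ENNReal.toReal_one, smul_eq_mul, mul_one, one_smul] at h1
  rw [Fin.sum_univ_three] at h1
  unfold mom
  linarith

lemma mom_diag_val (i : Fin 3) : mom i i = 3⁻¹ := by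
  have h01 := mom_diag 0 1
  have h02 := mom_diag 0 2
  have hs := mom_sum
  have hi := mom_diag i 0
  rw [hi]
  rw [← h01, ← h02] at hs
  linarith

end integrals

lemma mom_eq (i j : Fin 3) : mom i j = if i = j then (3:ℝ)⁻¹ else 0 := by
  by_cases h : i = j
  · subst h; simp [mom_diag_val]
  · simp [h, mom_off i j h]

lemma integral_inner_smul (c : E3) :
    ∫ u : sphere (0:E3) 1, (inner ℝ c (u:E3) : ℝ) • (u:E3) ∂sphereProb = (3:ℝ)⁻¹ • c := by
  have hcont : Continuous (fun u : sphere (0:E3) 1 => (inner ℝ c (u:E3) : ℝ) • (u:E3)) :=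
    (Continuous.inner (𝕜 := ℝ) continuous_const continuous_subtype_val).smul continuous_subtype_val
  have hi := cont_integrable _ hcont
  ext j
  have hco : (∫ u : sphere (0:E3) 1, (inner ℝ c (u:E3) : ℝ) • (u:E3) ∂sphereProb) j
       = ∫ u : sphere (0:E3) 1, (inner ℝ c (u:E3) : ℝ) * (u:E3) j ∂sphereProb := by
    have h0 : (∫ u : sphere (0:E3) 1, (inner ℝ c (u:E3) : ℝ) • (u:E3) ∂sphereProb) j
        = (EuclideanSpace.proj (𝕜 := ℝ) j) (∫ u : sphere (0:E3) 1, (inner ℝ c (u:E3) : ℝ) • (u:E3) ∂sphereProb) := rfl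
    rw [h0, ← ContinuousLinearMap.integral_comp_comm _ hi]
    simp [smul_eq_mul]
  rw [hco]
  have h2 : ∀ u : sphere (0:E3) 1, (inner ℝ c (u:E3) : ℝ) * (u:E3) j
      = ∑ i : Fin 3, c i * ((u:E3) i * (u:E3) j) := by
    intro u; rw [PiLp.inner_apply]
    simp [RCLike.inner_apply, Finset.sum_mul, mul_assoc]
    exact Finset.sum_congr rfl (fun x _ => by ring)
  simp only [h2]
  rw [integral_finset_sum _ (fun i _ => (hint_mom i j).const_mul (c i))]
  simp only [integral_const_mul]
  have hm : ∀ i : Fin 3, (∫ u : sphere (0:E3) 1, (u:E3) i * (u:E3) j ∂sphereProb) = mom i j :=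
    fun i => rfl
  simp only [hm, mom_eq]
  simp [Finset.sum_ite_eq, mul_comm]

lemma csSup_sub_const (A : Set ℝ) (hA : A.Nonempty) (hb : BddAbove A) (b : ℝ) :
    sSup ((fun t => t - b) '' A) = sSup A - b := by
  have h := isLUB_csSup hA hb
  apply IsLUB.csSup_eq _ (hA.image _)
  constructor
  · rintro y ⟨t, ht, rfl⟩; exact sub_le_sub_right (h.1 ht) b
  · intro c hc
    have h2 : sSup A ≤ c + b := h.2 (fun t ht => by
      have := hc (mem_image_of_mem _ ht); simp at this; linarith)
    linarith

section suppFn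
variable {K : Set E3} (hK : IsCompact K) (hne : K.Nonempty)

lemma cont_inner_right (u : E3) : Continuous (fun x : E3 => (inner ℝ x u : ℝ)) :=
  Continuous.inner continuous_id continuous_const

include hK in
lemma suppFn_bddAbove (u : E3) : BddAbove ((fun x => inner ℝ x u : E3 → ℝ) '' K) :=
  (hK.image (cont_inner_right u)).bddAbove

include hK in
lemma le_suppFn {x : E3} (hx : x ∈ K) (u : E3) : (inner ℝ x u : ℝ) ≤ suppFn K u :=
  le_csSup (suppFn_bddAbove hK u) (mem_image_of_mem _ hx)

include hne in
lemma suppFn_le {u : E3} {a : ℝ} (h : ∀ x ∈ K, (inner ℝ x u : ℝ) ≤ a) : suppFn K u ≤ a :=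
  csSup_le (hne.image _) (by rintro y ⟨x, hx, rfl⟩; exact h x hx)

include hK hne in
lemma suppFn_sub_le {R : ℝ} (hR : ∀ x ∈ K, ‖x‖ ≤ R) (u v : E3) :
    suppFn K u - suppFn K v ≤ R * ‖u - v‖ := by
  have h1 : suppFn K u ≤ suppFn K v + R * ‖u - v‖ := by
    apply suppFn_le hne
    intro x hx
    have h2 : (inner ℝ x u : ℝ) = inner ℝ x v + inner ℝ x (u - v) := by
      rw [← inner_add_right]; congr 1; abel
    have h3 : (inner ℝ x (u - v) : ℝ) ≤ ‖x‖ * ‖u - v‖ := real_inner_le_norm _ _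
    have h4 := le_suppFn hK hx v
    have h5 : ‖x‖ * ‖u - v‖ ≤ R * ‖u - v‖ :=
      mul_le_mul_of_nonneg_right (hR x hx) (norm_nonneg _)
    linarith
  linarith

include hK hne in
lemma continuous_suppFn : Continuous (suppFn K) := by
  obtain ⟨R, hR⟩ := hK.isBounded.subset_closedBall 0
  have hR' : ∀ x ∈ K, ‖x‖ ≤ R := fun x hx => by
    simpa [mem_closedBall, dist_zero_right] using hR hx
  have hR0 : 0 ≤ R := le_trans (norm_nonneg _) (hR' _ hne.some_mem)
  apply LipschitzWith.continuous (K := ⟨R, hR0⟩)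
  apply LipschitzWith.of_dist_le_mul
  intro u v
  rw [Real.dist_eq, dist_eq_norm]
  rw [abs_sub_le_iff]
  constructor
  · exact suppFn_sub_le hK hne hR' u v
  · have := suppFn_sub_le hK hne hR' v u
    rwa [norm_sub_rev] at this

include hK hne in
lemma suppFn_translate (c u : E3) :
    suppFn ((fun x => x - c) '' K) u = suppFn K u - inner ℝ c u := by
  unfold suppFn
  rw [image_image]
  have he : (fun x : E3 => (inner ℝ (x - c) u : ℝ)) =
      (fun t : ℝ => t - inner ℝ c u) ∘ (fun x : E3 => (inner ℝ x u : ℝ)) := by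
    funext x; simp [inner_sub_left]
  rw [he, image_comp]
  exact csSup_sub_const _ (hne.image _) (suppFn_bddAbove hK u) _

lemma suppFn_linear (g : E3 ≃ₗᵢ[ℝ] E3) (u : E3) :
    suppFn (g '' K) u = suppFn K (g.symm u) := by
  unfold suppFn
  rw [image_image]
  congr 1
  apply image_congr
  intro x _
  rw [← LinearIsometryEquiv.inner_map_map g x (g.symm u), g.apply_symm_apply]

end suppFn


section steiner
variable {K : Set E3} (hK : IsCompact K) (hne : K.Nonempty)

include hK hne in
lemma integrable_suppFn_smul :
    Integrable (fun u : sphere (0:E3) 1 => suppFn K (u:E3) • (u:E3)) sphereProb :=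
  cont_integrable _ (((continuous_suppFn hK hne).comp continuous_subtype_val).smul
    continuous_subtype_val)

include hK hne in
lemma steinerPoint_translate (c : E3) :
    steinerPoint ((fun x => x - c) '' K) = steinerPoint K - c := by
  unfold steinerPoint
  simp only [suppFn_translate hK hne c, sub_smul]
  rw [integral_sub (integrable_suppFn_smul hK hne)
    (cont_integrable (fun u : sphere (0:E3) 1 => (inner ℝ c (u:E3) : ℝ) • (u:E3)) ((Continuous.inner (𝕜 := ℝ) continuous_const continuous_subtype_val).smul
      continuous_subtype_val)), integral_inner_smul]
  rw [smul_sub, smul_smul]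
  norm_num

include hK hne in
lemma steinerPoint_linear (g : E3 ≃ₗᵢ[ℝ] E3) :
    steinerPoint (g '' K) = g (steinerPoint K) := by
  unfold steinerPoint
  simp only [suppFn_linear g]
  rw [← integral_sphereMap g (f := fun u : sphere (0:E3) 1 => suppFn K (g.symm (u:E3)) • (u:E3))]
  have he : ∀ u : sphere (0:E3) 1,
      suppFn K (g.symm (sphereMap g u : E3)) • ((sphereMap g u : E3))
        = g.toLinearIsometry.toContinuousLinearMap (suppFn K (u:E3) • (u:E3)) := by
    intro u
    simp [sphereMap, _root_.map_smul]
  simp only [he]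
  rw [ContinuousLinearMap.integral_comp_comm _ (integrable_suppFn_smul hK hne)]
  simp [_root_.map_smul]

include hK hne in
lemma steinerPoint_isometry (g : E3 ≃ᵢ E3) :
    steinerPoint (g '' K) = g.toRealLinearIsometryEquiv (steinerPoint K) + g 0 := by
  have himg : g '' K = (fun y => y - (-(g 0))) '' (g.toRealLinearIsometryEquiv '' K) := by
    rw [image_image]
    apply image_congr
    intro x _
    simp
  rw [himg, steinerPoint_translate
    (hK.image g.toRealLinearIsometryEquiv.continuous) (hne.image _),
    steinerPoint_linear hK hne]
  simp [sub_neg_eq_add]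

end steiner

section hausdorff
variable {K L : Set E3} (hK : IsCompact K) (hneK : K.Nonempty) (hL : IsCompact L) (hneL : L.Nonempty)

include hK hneK hL hneL in
lemma suppFn_le_hausdorff (u : E3) (hu : ‖u‖ = 1) :
    suppFn K u - suppFn L u ≤ hausdorffDist K L := by
  have hfin : EMetric.hausdorffEdist K L ≠ ⊤ :=
    hausdorffEdist_ne_top_of_nonempty_of_bounded hneK hneL hK.isBounded hL.isBounded
  have key : ∀ ε > 0, suppFn K u ≤ suppFn L u + (hausdorffDist K L + ε) := by
    intro ε hε
    apply suppFn_le hneK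
    intro x hx
    obtain ⟨y, hy, hxy⟩ := exists_dist_lt_of_hausdorffDist_lt hx
      (lt_add_of_pos_right _ hε) hfin
    have h1 : (inner ℝ x u : ℝ) = inner ℝ y u + inner ℝ (x - y) u := by
      rw [← inner_add_left]; congr 1; abel
    have h2 : (inner ℝ (x - y) u : ℝ) ≤ ‖x - y‖ * ‖u‖ := real_inner_le_norm _ _
    have h3 := le_suppFn hL hy u
    have h4 : ‖x - y‖ = dist x y := (dist_eq_norm x y).symm
    rw [hu, mul_one, h4] at h2
    linarith [hxy.le]
  by_contra hcon
  push_neg at hcon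
  obtain ⟨ε, hε, hlt⟩ : ∃ ε > 0, suppFn L u + (hausdorffDist K L + ε) < suppFn K u := by
    refine ⟨(suppFn K u - suppFn L u - hausdorffDist K L)/2, by linarith, by linarith⟩
  exact absurd (key _ hε) (not_le.2 hlt)

include hK hneK hL hneL in
lemma abs_suppFn_le_hausdorff (u : E3) (hu : ‖u‖ = 1) :
    |suppFn K u - suppFn L u| ≤ hausdorffDist K L := by
  rw [abs_sub_le_iff]
  refine ⟨suppFn_le_hausdorff hK hneK hL hneL u hu, ?_⟩
  have := suppFn_le_hausdorff hL hneL hK hneK u hu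
  rwa [hausdorffDist_comm] at this

include hK hneK hL hneL in
lemma steinerPoint_dist_le :
    ‖steinerPoint K - steinerPoint L‖ ≤ 3 * hausdorffDist K L := by
  unfold steinerPoint
  rw [← smul_sub, ← integral_sub (integrable_suppFn_smul hK hneK)
    (integrable_suppFn_smul hL hneL)]
  rw [norm_smul]
  simp only [Real.norm_ofNat]
  have hb : ‖∫ u : sphere (0:E3) 1, (suppFn K (u:E3) • (u:E3) - suppFn L (u:E3) • (u:E3)) ∂sphereProb‖
      ≤ hausdorffDist K L := by
    have := norm_integral_le_of_norm_le_const (μ := sphereProb)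
      (f := fun u : sphere (0:E3) 1 => suppFn K (u:E3) • (u:E3) - suppFn L (u:E3) • (u:E3))
      (C := hausdorffDist K L) ?_
    · simpa using this
    · apply Filter.Eventually.of_forall
      intro u
      have hu : ‖(u:E3)‖ = 1 := by simpa [dist_zero_right] using u.2.out
      show ‖suppFn K (u:E3) • (u:E3) - suppFn L (u:E3) • (u:E3)‖ ≤ _
      rw [← sub_smul, norm_smul, hu, mul_one]
      exact abs_suppFn_le_hausdorff hK hneK hL hneL _ hu
  calc 3 * ‖_‖ ≤ 3 * hausdorffDist K L := by linarith [hb]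
  
include hK hneK hL hneL in
lemma hausdorffDist_translate_le (c c' : E3) :
    hausdorffDist ((fun x => x - c) '' K) ((fun x => x - c') '' L)
      ≤ hausdorffDist K L + ‖c - c'‖ := by
  have hiso : ∀ a : E3, Isometry (fun x : E3 => x - a) := fun a =>
    Isometry.of_dist_eq (fun x y => by
      rw [dist_eq_norm, dist_eq_norm]; congr 1; abel)
  have h1 : hausdorffDist ((fun x => x - c) '' K) ((fun x => x - c) '' L)
      = hausdorffDist K L := hausdorffDist_image (hiso c)
  have h2 : hausdorffDist ((fun x => x - c) '' L) ((fun x => x - c') '' L) ≤ ‖c - c'‖ := by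
    apply hausdorffDist_le_of_mem_dist (norm_nonneg _)
    · rintro x ⟨y, hy, rfl⟩
      refine ⟨y - c', mem_image_of_mem _ hy, ?_⟩
      rw [dist_eq_norm]
      have : y - c - (y - c') = c' - c := by abel
      rw [this, norm_sub_rev]
    · rintro x ⟨y, hy, rfl⟩
      refine ⟨y - c, mem_image_of_mem _ hy, ?_⟩
      rw [dist_eq_norm]
      have : y - c' - (y - c) = c - c' := by abel
      rw [this]
  have hfinKL : EMetric.hausdorffEdist K L ≠ ⊤ :=
    hausdorffEdist_ne_top_of_nonempty_of_bounded hneK hneL hK.isBounded hL.isBounded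
  have hfin2 : Metric.hausdorffEDist ((fun x => x - c) '' K) ((fun x => x - c) '' L) ≠ ⊤ := by
    rw [EMetric.hausdorffEdist_image (hiso c)]
    exact hfinKL
  calc hausdorffDist ((fun x => x - c) '' K) ((fun x => x - c') '' L)
      ≤ hausdorffDist ((fun x => x - c) '' K) ((fun x => x - c) '' L)
        + hausdorffDist ((fun x => x - c) '' L) ((fun x => x - c') '' L) :=
        hausdorffDist_triangle hfin2
    _ ≤ hausdorffDist K L + ‖c - c'‖ := by rw [h1]; linarith

end hausdorff


lemma affDim_translate (K : Set E3) (c : E3) :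
    affDim ((fun x => x - c) '' K) = affDim K := by
  have hf : (fun x : E3 => x - c) = ⇑((AffineEquiv.constVAdd ℝ E3 (-c)) : E3 →ᵃ[ℝ] E3) := by
    funext x
    simp [AffineEquiv.constVAdd_apply, sub_eq_neg_add]
  unfold affDim
  rw [hf, ← AffineSubspace.map_span, AffineSubspace.map_direction]
  have hl : ((AffineEquiv.constVAdd ℝ E3 (-c) : E3 ≃ᵃ[ℝ] E3) : E3 →ᵃ[ℝ] E3).linear
      = LinearMap.id := rfl
  rw [hl, Submodule.map_id]



lemma stmt14_part1 (r : KvSet → KsSet)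
    (hr : ∀ D : KvSet, ((r D).1 : Set E3)
      = (fun x => x - steinerPoint (D.1 : Set E3)) '' (D.1 : Set E3)) :
    ∀ a b : KvSet, IsoRel a b → OrthRel (r a) (r b) := by
  rintro a b ⟨g, hg⟩
  refine ⟨g.toRealLinearIsometryEquiv, ?_⟩
  rw [hr a, hr b]
  have hAc : IsCompact (a.1 : Set E3) := a.1.isCompact
  have hAne : (a.1 : Set E3).Nonempty := a.1.nonempty
  have hsB : steinerPoint (⇑g '' (a.1 : Set E3))
      = g.toRealLinearIsometryEquiv (steinerPoint (a.1 : Set E3)) + g 0 :=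
    steinerPoint_isometry hAc hAne g
  rw [← hg, image_image, image_image, hsB]
  apply image_congr
  intro x _
  simp only [map_sub, IsometryEquiv.toRealLinearIsometryEquiv_apply]
  abel

lemma continuous_rmap (r : KvSet → KsSet)
    (hr : ∀ D : KvSet, ((r D).1 : Set E3)
      = (fun x => x - steinerPoint (D.1 : Set E3)) '' (D.1 : Set E3)) :
    Continuous r := by
  apply LipschitzWith.continuous (K := 4)
  apply LipschitzWith.of_dist_le_mul
  intro a b
  have hAc := a.1.isCompact
  have hAne := a.1.nonempty
  have hBc := b.1.isCompact
  have hBne := b.1.nonempty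
  have hd1 : dist (r a) (r b) = hausdorffDist ((r a).1 : Set E3) ((r b).1 : Set E3) := by
    rw [Subtype.dist_eq, Metric.NonemptyCompacts.dist_eq]
  have hd2 : dist a b = hausdorffDist ((a.1 : Set E3)) ((b.1 : Set E3)) := by
    rw [Subtype.dist_eq, Metric.NonemptyCompacts.dist_eq]
  rw [hd1, hd2, hr a, hr b]
  have h1 := hausdorffDist_translate_le hAc hAne hBc hBne
    (steinerPoint (a.1 : Set E3)) (steinerPoint (b.1 : Set E3))
  have h2 := steinerPoint_dist_le hAc hAne hBc hBne
  have h3 : (0:ℝ) ≤ hausdorffDist ((a.1 : Set E3)) ((b.1 : Set E3)) := hausdorffDist_nonneg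
  calc hausdorffDist _ _ ≤ _ := h1
    _ ≤ (4:ℝ) * hausdorffDist ((a.1 : Set E3)) ((b.1 : Set E3)) := by
        rw [← dist_eq_norm] at h2
        rw [dist_eq_norm] at h2
        linarith
    _ = _ := by norm_num

/-- the map `r(D) = D − s(D)` sends `Iso(ℝ³)`-orbits into `O(3)`-orbits,
induces a homeomorphism of orbit spaces `K/Iso(ℝ³) → K_s/O(3)`, and preserves affine
dimension. -/
theorem stmt14 (r : KvSet → KsSet)
    (hr : ∀ D : KvSet, ((r D).1 : Set E3)
      = (fun x => x - steinerPoint (D.1 : Set E3)) '' (D.1 : Set E3)) :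
    (∀ a b : KvSet, IsoRel a b → OrthRel (r a) (r b)) ∧
    (∃ H : Quot IsoRel ≃ₜ Quot OrthRel,
      ∀ D : KvSet, H (Quot.mk IsoRel D) = Quot.mk OrthRel (r D)) ∧
    (∀ D : KvSet, affDim ((r D).1 : Set E3) = affDim (D.1 : Set E3)) := by
  have part1 := stmt14_part1 r hr
  refine ⟨part1, ?_, fun D => by rw [hr D]; exact affDim_translate _ _⟩
  have hwellF : ∀ a b : KvSet, IsoRel a b → Quot.mk OrthRel (r a) = Quot.mk OrthRel (r b) :=
    fun a b h => Quot.sound (part1 a b h)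
  let incl : KsSet → KvSet := fun D => ⟨D.1, D.2.1⟩
  have hincl_cont : Continuous incl := Continuous.subtype_mk continuous_subtype_val _
  have hwellG : ∀ a b : KsSet, OrthRel a b → Quot.mk IsoRel (incl a) = Quot.mk IsoRel (incl b) := by
    rintro a b ⟨g, hg⟩
    exact Quot.sound ⟨g.toIsometryEquiv, hg⟩
  refine ⟨Homeomorph.mk ⟨Quot.lift (fun D => Quot.mk OrthRel (r D)) hwellF,
    Quot.lift (fun D => Quot.mk IsoRel (incl D)) hwellG, ?_, ?_⟩ ?_ ?_, fun D => rfl⟩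
  · apply Quot.ind
    intro D
    show Quot.mk IsoRel (incl (r D)) = Quot.mk IsoRel D
    apply Quot.sound
    refine ⟨IsometryEquiv.addRight (steinerPoint (D.1 : Set E3)), ?_⟩
    show ⇑(IsometryEquiv.addRight (steinerPoint (D.1 : Set E3))) '' ((r D).1 : Set E3)
        = (D.1 : Set E3)
    rw [hr D, image_image]
    have : ∀ x : E3, IsometryEquiv.addRight (steinerPoint (D.1 : Set E3))
        (x - steinerPoint (D.1 : Set E3)) = x := by
      intro x; simp [sub_add_cancel]
    simp only [this, image_id']
  · apply Quot.ind
    intro D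
    show Quot.mk OrthRel (r (incl D)) = Quot.mk OrthRel D
    have heq : r (incl D) = D := by
      apply Subtype.ext
      apply TopologicalSpace.NonemptyCompacts.ext
      rw [hr (incl D)]
      have h0 : steinerPoint (((incl D).1 : Set E3)) = 0 := D.2.2
      rw [h0]
      simp
      rfl
    rw [heq]
  · exact continuous_quot_lift _ ((continuous_quot_mk).comp (continuous_rmap r hr))
  · exact continuous_quot_lift _ ((continuous_quot_mk).comp hincl_cont)
end
end
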